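/- Let n ≥ 5 be odd. Then there exists a set C of words of length n and weight 3 over Fin (n−1) such that any two distinct members of C have Hamming distance at least 4 and every 3-element subset of Fin n is the support of exactly one codeword of C; moreover, no such set of words exists over Fin q for any q ≤ n−2. (That is, q₀(3,n) = n−1 for odd n.) -/

import Mathlib

/-- The weight of a word `x : Fin n → Fin q`: the number of nonzero coordinates. -/
def wt {n q : ℕ} (x : Fin n → Fin q) : ℕ :=
  (Finset.univ.filter fun i => (x i : ℕ) ≠ 0).card

/-- The support of a word `x : Fin n → Fin q`: the set of nonzero coordinates. -/
def supp {n q : ℕ} (x : Fin n → Fin q) : Finset (Fin n) :=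
  Finset.univ.filter fun i => (x i : ℕ) ≠ 0

/-- `C` is an `(n, w+1, w)_q` code with minimum Hamming distance `w + 1` in which
every `w`-element subset of `Fin n` is the support of exactly one codeword. -/
def IsPerfectSupportCode (n w q : ℕ) (C : Finset (Fin n → Fin q)) : Prop :=
  (∀ c ∈ C, wt c = w) ∧
  (∀ c₁ ∈ C, ∀ c₂ ∈ C, c₁ ≠ c₂ → w + 1 ≤ hammingDist c₁ c₂) ∧
  (∀ S : Finset (Fin n), S.card = w → ∃! c, c ∈ C ∧ supp c = S)

open Finset

/-- `(b - a - 1) mod n`. -/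
def pfn (n : ℕ) (a b : Fin n) : ℕ := ((b : ℕ) + n - 1 - (a : ℕ)) % n

lemma pfn_eq (n : ℕ) (a b : Fin n) : pfn n a b = ((b : ℕ) + (n - 1 - (a : ℕ))) % n := by
  unfold pfn; congr 1; have := a.isLt; have := b.isLt; omega

lemma pfn_lt (n : ℕ) (a b : Fin n) : pfn n a b < n :=
  Nat.mod_lt _ (lt_of_le_of_lt (Nat.zero_le _) a.isLt)

lemma pfn_inj (n : ℕ) (a b c : Fin n) (h : pfn n a b = pfn n a c) : b = c := by
  rw [pfn_eq, pfn_eq] at h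
  have h2 : (b : ℕ) ≡ (c : ℕ) [MOD n] := Nat.ModEq.add_right_cancel' _ h
  have := b.isLt; have := c.isLt
  exact Fin.ext (by rwa [Nat.ModEq, Nat.mod_eq_of_lt b.isLt, Nat.mod_eq_of_lt c.isLt] at h2)

lemma pfn_self (n : ℕ) (a : Fin n) : pfn n a a = n - 1 := by
  rw [pfn_eq]
  have h1 : (a : ℕ) + (n - 1 - (a : ℕ)) = n - 1 := by have := a.isLt; omega
  rw [h1, Nat.mod_eq_of_lt (by have := a.isLt; omega)]

lemma pfn_le (n : ℕ) (a b : Fin n) (h : b ≠ a) : pfn n a b ≤ n - 2 := by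
  have h1 := pfn_lt n a b
  by_contra hc
  have : pfn n a b = n - 1 := by omega
  exact h (pfn_inj n a b a (by rw [this, pfn_self]))

/-- color of the pair `{u, v}` in the one-factorization of `K_{m+1}` with vertex set
`{0,...,m-1} ∪ {∞}` where `∞` is encoded as `m`. -/
def colv (m u v : ℕ) : ℕ :=
  if u = m then (2 * v) % m else if v = m then (2 * u) % m else (u + v) % m

lemma colv_ne (m u v w : ℕ) (hm : Odd m) (hm3 : 3 ≤ m) (hu : u ≤ m) (hv : v ≤ m) (hw : w ≤ m)
    (hvu : v ≠ u) (hwu : w ≠ u) (hvw : v ≠ w) : colv m u v ≠ colv m u w := by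
  have hg : Nat.gcd m 2 = 1 := Nat.coprime_two_right.mpr hm
  unfold colv
  by_cases h1 : u = m
  · simp only [h1, if_pos rfl]
    intro h
    have h2 : 2 * v ≡ 2 * w [MOD m] := h
    have h3 := Nat.ModEq.cancel_left_of_coprime hg h2
    have hvm : v < m := lt_of_le_of_ne hv (h1 ▸ hvu)
    have hwm : w < m := lt_of_le_of_ne hw (h1 ▸ hwu)
    exact hvw (by rwa [Nat.ModEq, Nat.mod_eq_of_lt hvm, Nat.mod_eq_of_lt hwm] at h3)
  · rw [if_neg h1]
    have hum : u < m := lt_of_le_of_ne hu h1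
    by_cases h2 : v = m
    · rw [if_pos h2, if_neg h1, if_neg (fun h => hvw (h2.trans h.symm))]
      intro h
      have h3 : u + u ≡ u + w [MOD m] := by rwa [← two_mul]
      have h4 := Nat.ModEq.add_left_cancel' _ h3
      have hwm : w < m := lt_of_le_of_ne hw (fun h => hvw (h2.trans h.symm))
      exact hwu ((by rwa [Nat.ModEq, Nat.mod_eq_of_lt hum, Nat.mod_eq_of_lt hwm] at h4 : u = w) ▸ rfl)
    · rw [if_neg h2, if_neg h1]
      by_cases h3 : w = m
      · rw [if_pos h3]
        intro h
        have h4 : u + v ≡ u + u [MOD m] := by rwa [← two_mul]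
        have h5 := Nat.ModEq.add_left_cancel' _ h4
        have hvm : v < m := lt_of_le_of_ne hv h2
        exact hvu (by rwa [Nat.ModEq, Nat.mod_eq_of_lt hvm, Nat.mod_eq_of_lt hum] at h5)
      · rw [if_neg h3]
        intro h
        have h4 := Nat.ModEq.add_left_cancel' u (h : u + v ≡ u + w [MOD m])
        have hvm : v < m := lt_of_le_of_ne hv h2
        have hwm : w < m := lt_of_le_of_ne hw h3
        exact hvw (by rwa [Nat.ModEq, Nat.mod_eq_of_lt hvm, Nat.mod_eq_of_lt hwm] at h4)

/-- Color of the pair `T` (as seen from coordinate `i`), set-theoretic version. -/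
def colS (n : ℕ) (i : Fin n) (T : Finset (Fin n)) : ℕ :=
  if (n - 2) ∈ T.image (pfn n i) then (2 * T.sum (pfn n i) - 2 * (n - 2)) % (n - 2)
  else (T.sum (pfn n i)) % (n - 2)

lemma colS_lt (n : ℕ) (hn : 5 ≤ n) (i : Fin n) (T : Finset (Fin n)) : colS n i T < n - 2 := by
  unfold colS
  split <;> exact Nat.mod_lt _ (by omega)

lemma colS_pair (n : ℕ) (i b c : Fin n) (hbc : b ≠ c) (hb : b ≠ i) (hc : c ≠ i) :
    colS n i {b, c} = colv (n - 2) (pfn n i b) (pfn n i c) := by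
  have hub := pfn_le n i b hb
  have huc := pfn_le n i c hc
  unfold colS colv
  rw [Finset.sum_pair hbc]
  have himg : ({b, c} : Finset (Fin n)).image (pfn n i) = {pfn n i b, pfn n i c} := by
    simp [Finset.image_insert]
  rw [himg]
  by_cases h1 : pfn n i b = n - 2
  · rw [if_pos (by simp [h1]), if_pos h1]
    congr 1
    omega
  · rw [if_neg h1]
    by_cases h2 : pfn n i c = n - 2
    · rw [if_pos (by simp [h2]), if_pos h2]
      congr 1
      omega
    · rw [if_neg (by simp only [Finset.mem_insert, Finset.mem_singleton]; omega), if_neg h2]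

/-- The codeword with support `S`. -/
def wordS (n : ℕ) (hn : 5 ≤ n) (S : Finset (Fin n)) : Fin n → Fin (n - 1) := fun i =>
  if i ∈ S then ⟨1 + colS n i (S.erase i), by have := colS_lt n hn i (S.erase i); omega⟩
  else ⟨0, by omega⟩

lemma supp_wordS (n : ℕ) (hn : 5 ≤ n) (S : Finset (Fin n)) : supp (wordS n hn S) = S := by
  ext i
  simp only [supp, Finset.mem_filter]
  by_cases hi : i ∈ S <;> simp [supp, wordS, hi]

lemma wordS_ne_at (n : ℕ) (hn : 5 ≤ n) (S T : Finset (Fin n)) (i : Fin n)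
    (hi : i ∈ S) (hi' : i ∉ T) : wordS n hn S i ≠ wordS n hn T i := by
  simp only [wordS, if_pos hi, if_neg hi']
  intro h
  simp only [Fin.mk.injEq] at h
  omega

lemma wordS_dist (n : ℕ) (hn : 5 ≤ n) (hodd : Odd n) (S T : Finset (Fin n))
    (hS : S.card = 3) (hT : T.card = 3) (hST : S ≠ T) :
    4 ≤ hammingDist (wordS n hn S) (wordS n hn T) := by
  classical
  have hdist : hammingDist (wordS n hn S) (wordS n hn T)
      = (univ.filter fun i => wordS n hn S i ≠ wordS n hn T i).card := rfl
  set D := univ.filter fun i => wordS n hn S i ≠ wordS n hn T i with hD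
  have hsub1 : S \ T ⊆ D := by
    intro i hi
    rw [mem_sdiff] at hi
    exact mem_filter.mpr ⟨mem_univ _, wordS_ne_at n hn S T i hi.1 hi.2⟩
  have hsub2 : T \ S ⊆ D := by
    intro i hi
    rw [mem_sdiff] at hi
    exact mem_filter.mpr ⟨mem_univ _, fun h => wordS_ne_at n hn T S i hi.1 hi.2 h.symm⟩
  have hcS := Finset.card_sdiff_add_card_inter S T
  have hcT := Finset.card_sdiff_add_card_inter T S
  rw [Finset.inter_comm T S] at hcT
  have hk3 : (S ∩ T).card ≤ 2 := by
    by_contra hc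
    have h2 : S ∩ T = S := Finset.eq_of_subset_of_card_le Finset.inter_subset_left (by omega)
    exact hST (Finset.eq_of_subset_of_card_le (h2 ▸ Finset.inter_subset_right) (by omega))
  rw [hdist]
  rcases Nat.lt_or_ge (S ∩ T).card 2 with hk | hk
  · -- |S ∩ T| ≤ 1 : the symmetric difference already has ≥ 4 elements
    have hdisj : Disjoint (S \ T) (T \ S) := disjoint_sdiff_sdiff
    have hU : (S \ T) ∪ (T \ S) ⊆ D := Finset.union_subset hsub1 hsub2
    have := Finset.card_le_card hU
    rw [Finset.card_union_of_disjoint hdisj] at this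
    omega
  · -- |S ∩ T| = 2
    have hk2 : (S ∩ T).card = 2 := le_antisymm hk3 hk
    obtain ⟨a, b, hab, habI⟩ := Finset.card_eq_two.mp hk2
    obtain ⟨c, hc⟩ := Finset.card_eq_one.mp (show (S \ T).card = 1 by omega)
    obtain ⟨d, hd⟩ := Finset.card_eq_one.mp (show (T \ S).card = 1 by omega)
    have haST : a ∈ S ∩ T := habI ▸ Finset.mem_insert_self _ _
    have hbST : b ∈ S ∩ T := habI ▸ Finset.mem_insert_of_mem (Finset.mem_singleton_self _)
    have haS : a ∈ S := (Finset.mem_inter.mp haST).1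
    have haT : a ∈ T := (Finset.mem_inter.mp haST).2
    have hbS : b ∈ S := (Finset.mem_inter.mp hbST).1
    have hbT : b ∈ T := (Finset.mem_inter.mp hbST).2
    have hcS' : c ∈ S ∧ c ∉ T := Finset.mem_sdiff.mp (hc ▸ Finset.mem_singleton_self c)
    have hdT' : d ∈ T ∧ d ∉ S := Finset.mem_sdiff.mp (hd ▸ Finset.mem_singleton_self d)
    have hca : c ≠ a := fun h => hcS'.2 (h ▸ haT)
    have hcb : c ≠ b := fun h => hcS'.2 (h ▸ hbT)
    have hda : d ≠ a := fun h => hdT'.2 (h ▸ haS)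
    have hdb : d ≠ b := fun h => hdT'.2 (h ▸ hbS)
    have hcd : c ≠ d := fun h => hdT'.2 (h ▸ hcS'.1)
    have hSeq : S = insert a (insert b {c}) := by
      have h4 := Finset.sdiff_union_inter S T
      rw [hc, habI] at h4
      rw [← h4]; ext x
      simp only [Finset.mem_union, Finset.mem_singleton, Finset.mem_insert]
      tauto
    have hTeq : T = insert a (insert b {d}) := by
      have h4 := Finset.sdiff_union_inter T S
      rw [hd, Finset.inter_comm, habI] at h4
      rw [← h4]; ext x
      simp only [Finset.mem_union, Finset.mem_singleton, Finset.mem_insert]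
      tauto
    have heSa : S.erase a = {b, c} := by
      rw [hSeq, Finset.erase_insert (by simp [hab, hca.symm])]
    have heTa : T.erase a = {b, d} := by
      rw [hTeq, Finset.erase_insert (by simp [hab, hda.symm])]
    have heSb : S.erase b = {a, c} := by
      rw [hSeq, Finset.erase_insert_of_ne hab, Finset.erase_insert (by simp [hcb.symm])]
    have heTb : T.erase b = {a, d} := by
      rw [hTeq, Finset.erase_insert_of_ne hab, Finset.erase_insert (by simp [hdb.symm])]
    have hmodd : Odd (n - 2) := by
      obtain ⟨k, hk'⟩ := hodd; exact ⟨k - 1, by omega⟩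
    have hm3 : 3 ≤ n - 2 := by omega
    have haD : a ∈ D := by
      refine Finset.mem_filter.mpr ⟨Finset.mem_univ _, ?_⟩
      simp only [wordS, if_pos haS, if_pos haT, Ne, Fin.mk.injEq, add_right_inj]
      rw [heSa, heTa, colS_pair n a b c hcb.symm hab.symm hca,
        colS_pair n a b d hdb.symm hab.symm hda]
      exact colv_ne (n - 2) _ _ _ hmodd hm3
        (pfn_le n a b hab.symm) (pfn_le n a c hca) (pfn_le n a d hda)
        (fun h => hcb (pfn_inj n a c b h)) (fun h => hdb (pfn_inj n a d b h))
        (fun h => hcd (pfn_inj n a c d h))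
    have hbD : b ∈ D := by
      refine Finset.mem_filter.mpr ⟨Finset.mem_univ _, ?_⟩
      simp only [wordS, if_pos hbS, if_pos hbT, Ne, Fin.mk.injEq, add_right_inj]
      rw [heSb, heTb, colS_pair n b a c hca.symm hab hcb,
        colS_pair n b a d hda.symm hab hdb]
      exact colv_ne (n - 2) _ _ _ hmodd hm3
        (pfn_le n b a hab) (pfn_le n b c hcb) (pfn_le n b d hdb)
        (fun h => hca (pfn_inj n b c a h)) (fun h => hda (pfn_inj n b d a h))
        (fun h => hcd (pfn_inj n b c d h))
    have hcD : c ∈ D := hsub1 (hc ▸ Finset.mem_singleton_self c)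
    have hdD : d ∈ D := hsub2 (hd ▸ Finset.mem_singleton_self d)
    have hsub4 : ({a, b, c, d} : Finset (Fin n)) ⊆ D := by
      intro x hx
      simp only [Finset.mem_insert, Finset.mem_singleton] at hx
      rcases hx with h | h | h | h <;> subst h <;> assumption
    have hcard4 : ({a, b, c, d} : Finset (Fin n)).card = 4 := by
      rw [Finset.card_insert_of_notMem (by simp [hab, hca.symm, hda.symm]),
        Finset.card_insert_of_notMem (by simp [hcb.symm, hdb.symm]),
        Finset.card_insert_of_notMem (by simp [hcd]), Finset.card_singleton]
    calc 4 = ({a, b, c, d} : Finset (Fin n)).card := hcard4.symm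
      _ ≤ D.card := Finset.card_le_card hsub4

def Code (n : ℕ) (hn : 5 ≤ n) : Finset (Fin n → Fin (n - 1)) :=
  (Finset.univ.powersetCard 3).image (wordS n hn)

lemma code_perfect (n : ℕ) (hn : 5 ≤ n) (hodd : Odd n) :
    IsPerfectSupportCode n 3 (n - 1) (Code n hn) := by
  refine ⟨?_, ?_, ?_⟩
  · intro c hc
    obtain ⟨S, hS, rfl⟩ := Finset.mem_image.mp hc
    rw [Finset.mem_powersetCard] at hS
    show (supp _).card = 3
    rw [supp_wordS]; exact hS.2
  · intro c₁ h1 c₂ h2 hne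
    obtain ⟨S, hS, rfl⟩ := Finset.mem_image.mp h1
    obtain ⟨T, hT, rfl⟩ := Finset.mem_image.mp h2
    rw [Finset.mem_powersetCard] at hS hT
    exact wordS_dist n hn hodd S T hS.2 hT.2 (fun h => hne (h ▸ rfl))
  · intro S hS
    refine ⟨wordS n hn S,
      ⟨Finset.mem_image.mpr ⟨S, Finset.mem_powersetCard.mpr ⟨Finset.subset_univ S, hS⟩, rfl⟩,
        supp_wordS n hn S⟩, ?_⟩
    rintro c ⟨hc, hsupp⟩
    obtain ⟨T, hT, rfl⟩ := Finset.mem_image.mp hc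
    rw [supp_wordS] at hsupp
    rw [hsupp]

lemma lower_bound (n q : ℕ) (hn : 5 ≤ n) (hq : q ≤ n - 2)
    (C : Finset (Fin n → Fin q)) (h : IsPerfectSupportCode n 3 q C) : False := by
  classical
  obtain ⟨hw, hd, hu⟩ := h
  have hn0 : 0 < n := by omega
  rcases Nat.eq_zero_or_pos q with rfl | hq0
  · have h3 : ({⟨0, by omega⟩, ⟨1, by omega⟩, ⟨2, by omega⟩} : Finset (Fin n)).card = 3 := by
      rw [Finset.card_insert_of_notMem (by simp [Fin.ext_iff]),
        Finset.card_insert_of_notMem (by simp [Fin.ext_iff]), Finset.card_singleton]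
    obtain ⟨c, -, -⟩ := (hu _ h3).exists
    exact (c ⟨0, by omega⟩).elim0
  set a : Fin n := ⟨0, hn0⟩ with ha
  set V : Finset (Fin n) := Finset.univ.erase a with hV
  set P : Finset (Finset (Fin n)) := V.powersetCard 2 with hP
  have hVcard : V.card = n - 1 := by
    rw [hV, Finset.card_erase_of_mem (Finset.mem_univ a), Finset.card_univ, Fintype.card_fin]
  have hnotmem : ∀ T ∈ P, a ∉ T := by
    intro T hT ha'
    rw [Finset.mem_powersetCard] at hT
    exact (Finset.mem_erase.mp (hT.1 ha')).1 rfl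
  have hcard3 : ∀ T ∈ P, (insert a T).card = 3 := by
    intro T hT
    rw [Finset.card_insert_of_notMem (hnotmem T hT), (Finset.mem_powersetCard.mp hT).2]
  set cw : Finset (Fin n) → (Fin n → Fin q) := fun T =>
    if h3 : (insert a T).card = 3 then (hu _ h3).exists.choose else fun _ => ⟨0, hq0⟩ with hcw
  have hspec : ∀ T ∈ P, cw T ∈ C ∧ supp (cw T) = insert a T := by
    intro T hT
    have h3 := hcard3 T hT
    simp only [hcw]
    rw [dif_pos h3]
    exact (hu _ h3).exists.choose_spec
  set F : Finset (Fin n) → Fin q := fun T => cw T a with hF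
  have hF0 : ∀ T ∈ P, (F T : ℕ) ≠ 0 := by
    intro T hT
    have haT : a ∈ supp (cw T) := by
      rw [(hspec T hT).2]; exact Finset.mem_insert_self a T
    exact (Finset.mem_filter.mp haT).2
  set colors : Finset (Fin q) := Finset.univ.filter (fun v => (v : ℕ) ≠ 0) with hcolors
  have hcolcard : colors.card ≤ n - 3 := by
    have hsub : colors ⊆ Finset.univ.erase ⟨0, hq0⟩ := by
      intro v hv
      rw [Finset.mem_erase]
      exact ⟨fun h => (Finset.mem_filter.mp hv).2 (by rw [h]), Finset.mem_univ _⟩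
    have h1 := Finset.card_le_card hsub
    rw [Finset.card_erase_of_mem (Finset.mem_univ _), Finset.card_univ, Fintype.card_fin] at h1
    omega
  have hkey := Finset.card_eq_sum_card_fiberwise
    (f := F) (s := P) (t := colors)
    (fun T hT => Finset.mem_filter.mpr ⟨Finset.mem_univ _, hF0 T hT⟩)
  have hfiber : ∀ v ∈ colors, 2 * (P.filter (fun T => F T = v)).card ≤ n - 1 := by
    intro v hv
    set M := P.filter (fun T => F T = v) with hM
    have hMP : ∀ T ∈ M, T ∈ P := fun T hT => (Finset.mem_filter.mp hT).1
    have hMv : ∀ T ∈ M, F T = v := fun T hT => (Finset.mem_filter.mp hT).2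
    have hdisj : ∀ T ∈ M, ∀ T' ∈ M, T ≠ T' → Disjoint (id T) (id T') := by
      intro T hT T' hT' hne
      rw [id, id, Finset.disjoint_left]
      intro b hbT hbT'
      exfalso
      have hTP := hMP T hT
      have hT'P := hMP T' hT'
      have spec1 := hspec T hTP
      have spec2 := hspec T' hT'P
      have hne' : cw T ≠ cw T' := by
        intro hEq
        apply hne
        have hsupp : insert a T = insert a T' := by rw [← spec1.2, ← spec2.2, hEq]
        have := congrArg (fun s => Finset.erase s a) hsupp
        simpa [Finset.erase_insert (hnotmem T hTP), Finset.erase_insert (hnotmem T' hT'P)] using this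
      have hdist := hd (cw T) spec1.1 (cw T') spec2.1 hne'
      have hsubD : (Finset.univ.filter fun i => cw T i ≠ cw T' i) ⊆ T ∪ T' := by
        intro i hi
        have hine := (Finset.mem_filter.mp hi).2
        by_contra hiT
        rw [Finset.mem_union] at hiT
        push_neg at hiT
        by_cases hia : i = a
        · subst hia
          exact hine (show F T = F T' by rw [hMv T hT, hMv T' hT'])
        · have h1 : (cw T i : ℕ) = 0 := by
            by_contra h0
            have hm : i ∈ supp (cw T) := Finset.mem_filter.mpr ⟨Finset.mem_univ _, h0⟩
            rw [spec1.2] at hm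
            rcases Finset.mem_insert.mp hm with h' | h'
            exacts [hia h', hiT.1 h']
          have h2 : (cw T' i : ℕ) = 0 := by
            by_contra h0
            have hm : i ∈ supp (cw T') := Finset.mem_filter.mpr ⟨Finset.mem_univ _, h0⟩
            rw [spec2.2] at hm
            rcases Finset.mem_insert.mp hm with h' | h'
            exacts [hia h', hiT.2 h']
          exact hine (Fin.ext (h1.trans h2.symm))
      have hTc : T.card = 2 := (Finset.mem_powersetCard.mp hTP).2
      have hT'c : T'.card = 2 := (Finset.mem_powersetCard.mp hT'P).2
      have hcu := Finset.card_inter_add_card_union T T'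
      have hbi : 0 < (T ∩ T').card :=
        Finset.card_pos.mpr ⟨b, Finset.mem_inter.mpr ⟨hbT, hbT'⟩⟩
      have hDcard := Finset.card_le_card hsubD
      have hdd : hammingDist (cw T) (cw T')
          = (Finset.univ.filter fun i => cw T i ≠ cw T' i).card := rfl
      omega
    have hbu := Finset.card_biUnion hdisj
    have h2M : ∑ T ∈ M, T.card = 2 * M.card := by
      rw [Finset.sum_congr rfl (fun T hT => (Finset.mem_powersetCard.mp (hMP T hT)).2),
        Finset.sum_const, smul_eq_mul, mul_comm]
    have hsubV : M.biUnion id ⊆ V := by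
      intro x hx
      obtain ⟨T, hT, hxT⟩ := Finset.mem_biUnion.mp hx
      exact (Finset.mem_powersetCard.mp (hMP T hT)).1 hxT
    have hle := Finset.card_le_card hsubV
    simp only [id] at hbu
    omega
  have hPcard : P.card = (n - 1).choose 2 := by
    rw [hP, Finset.card_powersetCard, hVcard]
  have htot : 2 * P.card ≤ colors.card * (n - 1) := by
    calc 2 * P.card = ∑ v ∈ colors, 2 * (P.filter (fun T => F T = v)).card := by
          rw [hkey, Finset.mul_sum]
      _ ≤ ∑ _v ∈ colors, (n - 1) := Finset.sum_le_sum hfiber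
      _ = colors.card * (n - 1) := by rw [Finset.sum_const, smul_eq_mul]
  have hch : (n - 1).choose 2 = (n - 1) * (n - 2) / 2 := by
    rw [Nat.choose_two_right]
    have : n - 1 - 1 = n - 2 := by omega
    rw [this]
  have heven : 2 * ((n - 1) * (n - 2) / 2) = (n - 1) * (n - 2) := by
    obtain ⟨k, hk⟩ := Nat.even_mul_succ_self (n - 2)
    have hk' : (n - 1) * (n - 2) = k + k := by
      rw [mul_comm]
      rw [show n - 2 + 1 = n - 1 by omega] at hk
      exact hk
    omega
  have hfin : (n - 1) * (n - 2) ≤ (n - 3) * (n - 1) := by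
    calc (n - 1) * (n - 2) = 2 * P.card := by rw [hPcard, hch, heven]
      _ ≤ colors.card * (n - 1) := htot
      _ ≤ (n - 3) * (n - 1) := Nat.mul_le_mul_right _ hcolcard
  rw [mul_comm (n - 3) (n - 1)] at hfin
  have := Nat.le_of_mul_le_mul_left hfin (by omega : 0 < n - 1)
  omega

/-- For odd `n ≥ 5`, the smallest alphabet size admitting an `(n,4,3)_q` code
with a codeword on every `3`-subset is `q₀(3,n) = n - 1`. -/
theorem q0_three_odd (n : ℕ) (hn : 5 ≤ n) (hodd : Odd n) :
    (∃ C : Finset (Fin n → Fin (n - 1)), IsPerfectSupportCode n 3 (n - 1) C) ∧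
    (∀ q : ℕ, q ≤ n - 2 → ¬ ∃ C : Finset (Fin n → Fin q), IsPerfectSupportCode n 3 q C) := by
  constructor
  · exact ⟨Code n hn, code_perfect n hn hodd⟩
  · rintro q hq ⟨C, hC⟩
    exact lower_bound n q hn hq C hC
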